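/- Let D be a division ring with center F of characteristic p > 0, finite-dimensional over F, such that p does not divide √(dim_F D), and let n be a positive integer not divisible by p. Then M_n(D) = Z(M_n(D)) + [M_n(D), M_n(D)]. -/

import Mathlib

set_option maxHeartbeats 1000000
set_option synthInstance.maxHeartbeats 400000

open Matrix

/-- The additive subgroup generated by all additive commutators of a ring. -/
def commutatorAddSubgroup (R : Type*) [Ring R] : AddSubgroup R :=
  AddSubgroup.closure {x | ∃ a b : R, x = a * b - b * a}

lemma comm_mem {R : Type*} [Ring R] (a b : R) :
    a * b - b * a ∈ commutatorAddSubgroup R :=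
  AddSubgroup.subset_closure ⟨a, b, rfl⟩

section MatrixPart

variable {R : Type*} [Ring R] {n : ℕ}

lemma stdBasisMatrix_sub (i j : Fin n) (a b : R) :
    single i j (a - b) = single i j a - single i j b := by
  ext a' b'
  by_cases h : i = a' ∧ j = b' <;> simp [Matrix.single, h]

lemma stdBasisMatrix_neg (i j : Fin n) (a : R) :
    single i j (-a) = -single i j a := by
  ext a' b'
  by_cases h : i = a' ∧ j = b' <;> simp [Matrix.single, h]

lemma stdBasisMatrix_sum {ι : Type*} (s : Finset ι) (i j : Fin n) (d : ι → R) :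
    single i j (∑ k ∈ s, d k) = ∑ k ∈ s, single i j (d k) := by
  ext a' b'
  by_cases h : i = a' ∧ j = b' <;> simp [Matrix.sum_apply, Matrix.single, h]

lemma stdBasisMatrix_mem_of_ne (i j : Fin n) (h : i ≠ j) (c : R) :
    single i j c ∈ commutatorAddSubgroup (Matrix (Fin n) (Fin n) R) := by
  have : single i j c =
      single i i (1 : R) * single i j c -
        single i j c * single i i (1 : R) := by
    rw [single_mul_single_same, single_mul_single_of_ne (h := Ne.symm h), one_mul, sub_zero]
  rw [this]
  exact comm_mem _ _

lemma stdBasisMatrix_diag_sub_mem (i k : Fin n) (c : R) :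
    single i i c - single k k c
      ∈ commutatorAddSubgroup (Matrix (Fin n) (Fin n) R) := by
  have : single i i c - single k k c =
      single i k c * single k i (1 : R) -
        single k i (1 : R) * single i k c := by
    rw [single_mul_single_same, single_mul_single_same, mul_one, one_mul]
  rw [this]
  exact comm_mem _ _

lemma stdBasisMatrix_comm_entry_mem (i : Fin n) {c : R}
    (hc : c ∈ commutatorAddSubgroup R) :
    single i i c ∈ commutatorAddSubgroup (Matrix (Fin n) (Fin n) R) := by
  induction hc using AddSubgroup.closure_induction with
  | mem x hx =>
    obtain ⟨a, b, rfl⟩ := hx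
    have : single i i (a * b - b * a) =
        single i i a * single i i b -
          single i i b * single i i a := by
      rw [single_mul_single_same, single_mul_single_same, ← stdBasisMatrix_sub]
    rw [this]; exact comm_mem _ _
  | zero => simpa using (commutatorAddSubgroup (Matrix (Fin n) (Fin n) R)).zero_mem
  | add x y _ _ hx hy =>
    rw [single_add]
    exact AddSubgroup.add_mem _ hx hy
  | neg x _ hx =>
    rw [stdBasisMatrix_neg]
    exact AddSubgroup.neg_mem _ hx

/-- Key matrix reduction: any square matrix is congruent to `single 0 0 (trace A)`
modulo commutators. -/
lemma matrix_sub_trace_mem (h0 : 0 < n) (A : Matrix (Fin n) (Fin n) R) :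
    A - single ⟨0, h0⟩ ⟨0, h0⟩ (Matrix.trace A)
      ∈ commutatorAddSubgroup (Matrix (Fin n) (Fin n) R) := by
  set z : Fin n := ⟨0, h0⟩
  have hA : A - single z z (Matrix.trace A) =
      ∑ i : Fin n, ∑ j : Fin n,
        (single i j (A i j) - if i = j then single z z (A i j) else 0) := by
    have h1 : A = ∑ i : Fin n, ∑ j : Fin n, single i j (A i j) :=
      matrix_eq_sum_single A
    have h2 : single z z (Matrix.trace A) =
        ∑ i : Fin n, ∑ j : Fin n, (if i = j then single z z (A i j) else 0) := by
      rw [Matrix.trace, stdBasisMatrix_sum]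
      refine Finset.sum_congr rfl fun i _ => ?_
      rw [Finset.sum_ite_eq Finset.univ i (fun j => single z z (A i j))]
      simp [Matrix.diag]
    have hA' : ∑ i : Fin n, ∑ j : Fin n,
        (single i j (A i j) - if i = j then single z z (A i j) else 0) =
        (∑ i : Fin n, ∑ j : Fin n, single i j (A i j)) -
          ∑ i : Fin n, ∑ j : Fin n, (if i = j then single z z (A i j) else 0) := by
      rw [← Finset.sum_sub_distrib]
      exact Finset.sum_congr rfl fun i _ => by rw [← Finset.sum_sub_distrib]
    rw [hA', ← h1, ← h2]
  rw [hA]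
  refine AddSubgroup.sum_mem _ fun i _ => AddSubgroup.sum_mem _ fun j _ => ?_
  by_cases hij : i = j
  · subst hij
    simpa using stdBasisMatrix_diag_sub_mem i z (A i i)
  · simpa [hij] using stdBasisMatrix_mem_of_ne i j hij (A i j)

end MatrixPart

section Density

variable (D : Type*) [DivisionRing D]

local notation "F" => Subring.center D

/-- The endomorphism `x ↦ a * x * b`. -/
noncomputable def mulLR (a b : D) : Module.End F D :=
  LinearMap.mulLeft F a * LinearMap.mulRight F b

variable {D}

lemma mulLR_apply (a b x : D) : mulLR D a b x = a * (x * b) := rfl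

variable (D)

/-- The span of all two-sided multiplications. -/
noncomputable def Vspan : Submodule F (Module.End F D) :=
  Submodule.span F {f | ∃ a b, f = mulLR D a b}

variable {D}

lemma one_mem_Vspan : (1 : Module.End F D) ∈ Vspan D := by
  refine Submodule.subset_span ⟨1, 1, ?_⟩
  ext x
  simp [mulLR_apply]

lemma mulLR_mem_Vspan (a b : D) : mulLR D a b ∈ Vspan D :=
  Submodule.subset_span ⟨a, b, rfl⟩

lemma Vspan_mul_mem {u v : Module.End F D} (hu : ∃ a b, u = mulLR D a b) (hv : v ∈ Vspan D) :
    u * v ∈ Vspan D := by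
  induction hv using Submodule.span_induction with
  | mem f hf =>
    obtain ⟨a, b, rfl⟩ := hu
    obtain ⟨a', b', rfl⟩ := hf
    refine Submodule.subset_span ⟨a * a', b' * b, ?_⟩
    ext x
    simp [Module.End.mul_apply, mulLR_apply, mul_assoc]
  | zero => simpa using (Vspan D).zero_mem
  | add f g _ _ hf hg => rw [mul_add]; exact (Vspan D).add_mem hf hg
  | smul c f _ hf =>
    have h : u * (c • f) = c • (u * f) := by
      ext x
      simp [Module.End.mul_apply, _root_.map_smul]
    rw [h]
    exact (Vspan D).smul_mem c hf

end Density

section Density2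

variable {D : Type*} [DivisionRing D]

local notation "F" => Subring.center D

/-- Artin–Whaples style interpolation: on a linearly independent family, elements of
`Vspan` can take value 1 at one point and 0 elsewhere. -/
theorem Vspan_interp : ∀ (k : ℕ) (x : Fin k → D), LinearIndependent F x → ∀ (j : Fin k),
    ∃ v ∈ Vspan D, v (x j) = 1 ∧ ∀ i, i ≠ j → v (x i) = 0 := by
  intro k
  induction k with
  | zero => exact fun x _ j => j.elim0
  | succ k ih =>
    -- first: the distinguished index is the last one
    have last_case : ∀ (x : Fin (k + 1) → D), LinearIndependent F x →
        ∃ v ∈ Vspan D, v (x (Fin.last k)) = 1 ∧ ∀ i : Fin k, v (x i.castSucc) = 0 := by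
      intro x hx
      have hx0 : LinearIndependent F (x ∘ Fin.castSucc) :=
        hx.comp Fin.castSucc (Fin.castSucc_injective k)
      by_cases hcase : ∃ v ∈ Vspan D, (∀ i : Fin k, v (x i.castSucc) = 0) ∧
          v (x (Fin.last k)) ≠ 0
      · obtain ⟨v, hv, hvz, hvl⟩ := hcase
        refine ⟨mulLR D (v (x (Fin.last k)))⁻¹ 1 * v, Vspan_mul_mem ⟨_, _, rfl⟩ hv, ?_, ?_⟩
        · simp [Module.End.mul_apply, mulLR_apply, inv_mul_cancel₀ hvl]
        · intro i
          simp [Module.End.mul_apply, mulLR_apply, hvz i]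
      · push_neg at hcase
        exfalso
        choose v hv hv1 hv0 using fun j => ih (x ∘ Fin.castSucc) hx0 j
        simp only [Function.comp_apply] at hv1 hv0
        set c : Fin k → D := fun j => v j (x (Fin.last k)) with hc
        -- Claim 1
        have claim1 : ∀ w ∈ Vspan D, w (x (Fin.last k)) =
            ∑ j : Fin k, w (x j.castSucc) * c j := by
          intro w hw
          set w' : Module.End F D :=
            w - ∑ j : Fin k, mulLR D (w (x j.castSucc)) 1 * v j with hw'
          have hw'mem : w' ∈ Vspan D := by
            refine (Vspan D).sub_mem hw (Submodule.sum_mem _ fun j _ => ?_)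
            exact Vspan_mul_mem ⟨_, _, rfl⟩ (hv j)
          have hw'z : ∀ i : Fin k, w' (x i.castSucc) = 0 := by
            intro i
            simp only [hw', LinearMap.sub_apply, LinearMap.sum_apply, Module.End.mul_apply,
              mulLR_apply, mul_one]
            rw [Finset.sum_eq_single i]
            · rw [hv1 i, mul_one, sub_self]
            · intro j _ hji
              rw [hv0 j i (Ne.symm hji), mul_zero]
            · intro h; exact absurd (Finset.mem_univ i) h
          have := hcase w' hw'mem hw'z
          simp only [hw', LinearMap.sub_apply, LinearMap.sum_apply, Module.End.mul_apply,
            mulLR_apply, mul_one] at this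
          exact sub_eq_zero.mp this
        -- Claim 2 : the c j are central
        have claim2 : ∀ j : Fin k, c j ∈ Subring.center D := by
          intro j
          rw [Subring.mem_center_iff]
          intro b
          have h1 := claim1 (mulLR D 1 b * v j)
            (Vspan_mul_mem ⟨_, _, rfl⟩ (hv j))
          simp only [Module.End.mul_apply, mulLR_apply, one_mul] at h1
          rw [Finset.sum_eq_single j] at h1
          · rw [hv1 j, one_mul] at h1
            exact h1.symm
          · intro i _ hij
            rw [hv0 j i hij, zero_mul, zero_mul]
          · intro h; exact absurd (Finset.mem_univ j) h
        -- Claim 3 : contradiction with independence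
        have claim3 : x (Fin.last k) = ∑ j : Fin k,
            (⟨c j, claim2 j⟩ : F) • (x ∘ Fin.castSucc) j := by
          have h1 := claim1 1 one_mem_Vspan
          simp only [Module.End.one_apply] at h1
          rw [h1]
          refine Finset.sum_congr rfl fun j _ => ?_
          exact Subring.mem_center_iff.mp (claim2 j) _
        have hsnoc : LinearIndependent F (Fin.snoc (x ∘ Fin.castSucc) (x (Fin.last k)) :
            Fin (k + 1) → D) := by
          convert hx using 1
          funext i
          refine Fin.lastCases ?_ ?_ i <;> simp
        rw [linearIndependent_fin_snoc] at hsnoc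
        refine hsnoc.2 ?_
        rw [claim3]
        exact Submodule.sum_mem _ fun j _ =>
          Submodule.smul_mem _ _ (Submodule.subset_span (Set.mem_range_self j))
    -- general distinguished index, by swapping
    intro x hx j
    obtain ⟨v, hv, h1, h0⟩ := last_case (x ∘ Equiv.swap j (Fin.last k))
      (hx.comp _ (Equiv.injective _))
    refine ⟨v, hv, ?_, ?_⟩
    · simpa using h1
    · intro i hij
      have hne : Equiv.swap j (Fin.last k) i ≠ Fin.last k := by
        intro h
        exact hij (by simpa using congrArg (Equiv.swap j (Fin.last k)) h)
      obtain ⟨i0, hi0⟩ := Fin.exists_castSucc_eq.mpr hne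
      have := h0 i0
      rw [hi0] at this
      simpa using this

end Density2

section Surj

variable (D : Type*) [DivisionRing D]

local notation "F" => Subring.center D

theorem Vspan_eq_top [FiniteDimensional F D] : Vspan D = ⊤ := by
  rw [eq_top_iff]
  intro f _
  have e := Module.finBasis F D
  choose u hu hu1 hu0 using fun j => Vspan_interp (Module.finrank F D) e e.linearIndependent j
  have hf : f = ∑ j, mulLR D (f (e j)) 1 * u j := by
    refine Module.Basis.ext e fun i => ?_
    simp only [LinearMap.sum_apply, Module.End.mul_apply, mulLR_apply, mul_one]
    rw [Finset.sum_eq_single i]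
    · rw [hu1 i, mul_one]
    · intro j _ hji
      rw [hu0 j i (Ne.symm hji), mul_zero]
    · intro h; exact absurd (Finset.mem_univ i) h
  rw [hf]
  exact Submodule.sum_mem _ fun j _ => Vspan_mul_mem ⟨_, _, rfl⟩ (hu j)

open scoped TensorProduct

/-- Right multiplication as an algebra hom from the opposite algebra. -/
noncomputable def rmulAlgHom : Dᵐᵒᵖ →ₐ[F] Module.End F D where
  toFun b := LinearMap.mulRight F b.unop
  map_one' := by ext x; simp
  map_mul' b b' := by ext x; simp [Module.End.mul_apply, mul_assoc]
  map_zero' := by ext x; simp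
  map_add' b b' := by ext x; simp [mul_add]
  commutes' c := by
    ext x
    simp only [LinearMap.mulRight_apply]
    show x * (MulOpposite.unop (algebraMap (F) Dᵐᵒᵖ c)) = (algebraMap (F) (Module.End F D) c) x
    rw [Module.algebraMap_end_apply]
    show x * (c : D) = c • x
    rw [Subring.mem_center_iff.mp c.2 x]
    rfl

/-- The multiplication map `D ⊗ Dᵐᵒᵖ → End_F D`. -/
noncomputable def muMap : (D ⊗[F] Dᵐᵒᵖ) →ₐ[F] Module.End F D :=
  Algebra.TensorProduct.lift (Algebra.lmul F D) (rmulAlgHom D)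
    (fun a b => by
      ext x
      show a * (x * b.unop) = (a * x) * b.unop
      rw [mul_assoc])

lemma muMap_tmul (a : D) (b : Dᵐᵒᵖ) : muMap D (a ⊗ₜ b) = mulLR D a b.unop := by
  rw [muMap]
  ext x
  show a * (x * b.unop) = a * (x * b.unop)
  rfl

theorem muMap_surjective [FiniteDimensional F D] :
    Function.Surjective (muMap D) := by
  intro f
  have hf : f ∈ Vspan D := by rw [Vspan_eq_top]; trivial
  have : Vspan D ≤ LinearMap.range (muMap D).toLinearMap := by
    rw [Vspan, Submodule.span_le]
    rintro g ⟨a, b, rfl⟩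
    exact ⟨a ⊗ₜ MulOpposite.op b, muMap_tmul D a (MulOpposite.op b)⟩
  obtain ⟨t, ht⟩ := this hf
  exact ⟨t, ht⟩

end Surj

section Count

open Module

variable (K : Type*) [Field K]

/-- The `K`-span of additive commutators. -/
noncomputable def commSpan (R : Type*) [Ring R] [Algebra K R] : Submodule K R :=
  Submodule.span K {x | ∃ a b : R, x = a * b - b * a}

lemma comm_mem_commSpan {R : Type*} [Ring R] [Algebra K R] (a b : R) :
    a * b - b * a ∈ commSpan K R :=
  Submodule.subset_span ⟨a, b, rfl⟩

lemma traceMatrix_surjective (N : ℕ) (h0 : 0 < N) :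
    Function.Surjective (Matrix.traceLinearMap (Fin N) K K) := by
  intro c
  refine ⟨Matrix.single ⟨0, h0⟩ ⟨0, h0⟩ c, ?_⟩
  have : Matrix.trace (Matrix.single (⟨0, h0⟩ : Fin N) (⟨0, h0⟩ : Fin N) c) = c := by
    rw [Matrix.trace, Matrix.diag_single_same]
    simp
  exact this

lemma commAdd_subset_commSpan {R : Type*} [Ring R] [Algebra K R] {x : R}
    (hx : x ∈ commutatorAddSubgroup R) : x ∈ commSpan K R := by
  induction hx using AddSubgroup.closure_induction with
  | mem y hy => obtain ⟨a, b, rfl⟩ := hy; exact comm_mem_commSpan K a b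
  | zero => exact (commSpan K _).zero_mem
  | add y z _ _ hy hz => exact (commSpan K _).add_mem hy hz
  | neg y _ hy => exact (commSpan K R).neg_mem hy

lemma ker_trace_le_commSpan (N : ℕ) (h0 : 0 < N)
    (A : Matrix (Fin N) (Fin N) K) (hA : Matrix.trace A = 0) :
    A ∈ commSpan K (Matrix (Fin N) (Fin N) K) := by
  have h := matrix_sub_trace_mem h0 A
  rw [hA, single_zero, sub_zero] at h
  exact commAdd_subset_commSpan K h

lemma commSpan_matrix_finrank (N : ℕ) (h0 : 0 < N) :
    N * N - 1 ≤ finrank K (commSpan K (Matrix (Fin N) (Fin N) K)) := by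
  have hker : LinearMap.ker (Matrix.traceLinearMap (Fin N) K K) ≤
      commSpan K (Matrix (Fin N) (Fin N) K) := by
    intro A hA
    exact ker_trace_le_commSpan K N h0 A hA
  have h1 := (Matrix.traceLinearMap (Fin N) K K).finrank_range_add_finrank_ker
  rw [LinearMap.range_eq_top.mpr (traceMatrix_surjective K N h0)] at h1
  have h2 : finrank K (Matrix (Fin N) (Fin N) K) = N * N := by
    rw [Module.finrank_matrix]
    simp
  rw [h2] at h1
  have h3 : finrank K (⊤ : Submodule K K) = 1 := by simp
  rw [h3] at h1
  have h4 := Submodule.finrank_mono hker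
  omega

end Count

section Transfer

open Module

variable {K : Type*} [Field K] {R S : Type*} [Ring R] [Ring S] [Algebra K R] [Algebra K S]

lemma commSpan_map_algEquiv (ψ : R ≃ₐ[K] S) :
    (commSpan K R).map (ψ.toLinearEquiv : R →ₗ[K] S) = commSpan K S := by
  rw [commSpan, Submodule.map_span]
  congr 1
  ext y
  constructor
  · rintro ⟨x, ⟨a, b, rfl⟩, rfl⟩
    exact ⟨ψ a, ψ b, by simp⟩
  · rintro ⟨a, b, rfl⟩
    refine ⟨ψ.symm a * ψ.symm b - ψ.symm b * ψ.symm a, ⟨_, _, rfl⟩, by simp⟩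

lemma commSpan_finrank_algEquiv (ψ : R ≃ₐ[K] S) :
    finrank K (commSpan K R) = finrank K (commSpan K S) := by
  rw [← commSpan_map_algEquiv ψ]
  exact (LinearEquiv.finrank_map_eq ψ.toLinearEquiv _).symm

end Transfer

section MainCount

open Module MulOpposite
open scoped TensorProduct

variable (D : Type*) [DivisionRing D] [FiniteDimensional (Subring.center D) D]

local notation "F" => Subring.center D

lemma commSpan_op_map :
    (commSpan F D).map ((opLinearEquiv F : D ≃ₗ[F] Dᵐᵒᵖ) : D →ₗ[F] Dᵐᵒᵖ) =
      commSpan F Dᵐᵒᵖ := by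
  rw [commSpan, Submodule.map_span]
  congr 1
  ext y
  constructor
  · rintro ⟨x, ⟨a, b, rfl⟩, rfl⟩
    exact ⟨op b, op a, by simp⟩
  · rintro ⟨a, b, rfl⟩
    refine ⟨unop b * unop a - unop a * unop b, ⟨unop b, unop a, rfl⟩, by simp⟩

lemma commSpan_op_finrank :
    finrank F (commSpan F Dᵐᵒᵖ) = finrank F (commSpan F D) := by
  rw [← commSpan_op_map]
  exact LinearEquiv.finrank_map_eq (opLinearEquiv F : D ≃ₗ[F] Dᵐᵒᵖ) _

/-- The quotient map `D ⊗ Dᵐᵒᵖ → (D/[D,D]) ⊗ (Dᵐᵒᵖ/[Dᵐᵒᵖ,Dᵐᵒᵖ])`. -/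
noncomputable def PhiMap : (D ⊗[F] Dᵐᵒᵖ) →ₗ[F]
    ((D ⧸ commSpan F D) ⊗[F] (Dᵐᵒᵖ ⧸ commSpan F Dᵐᵒᵖ)) :=
  TensorProduct.map (commSpan F D).mkQ (commSpan F Dᵐᵒᵖ).mkQ

lemma PhiMap_mul_comm (s t : D ⊗[F] Dᵐᵒᵖ) : PhiMap D (s * t) = PhiMap D (t * s) := by
  induction s using TensorProduct.induction_on with
  | zero => simp
  | add s₁ s₂ h₁ h₂ => rw [add_mul, mul_add, map_add, map_add, h₁, h₂]
  | tmul a b =>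
    induction t using TensorProduct.induction_on with
    | zero => simp
    | add t₁ t₂ h₁ h₂ => rw [add_mul, mul_add, map_add, map_add, h₁, h₂]
    | tmul a' b' =>
      rw [Algebra.TensorProduct.tmul_mul_tmul, Algebra.TensorProduct.tmul_mul_tmul]
      rw [← sub_eq_zero, ← map_sub]
      have e1 : (a * a') ⊗ₜ[F] (b * b') - (a' * a) ⊗ₜ[F] (b' * b) =
          ((a * a' - a' * a) ⊗ₜ[F] (b * b')) + ((a' * a) ⊗ₜ[F] (b * b' - b' * b)) := by
        rw [TensorProduct.sub_tmul, TensorProduct.tmul_sub]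
        abel
      rw [e1, map_add]
      rw [PhiMap, TensorProduct.map_tmul, TensorProduct.map_tmul]
      have z1 : (commSpan F D).mkQ (a * a' - a' * a) = 0 := by
        rw [Submodule.mkQ_apply, Submodule.Quotient.mk_eq_zero]
        exact comm_mem_commSpan _ a a'
      have z2 : (commSpan F Dᵐᵒᵖ).mkQ (b * b' - b' * b) = 0 := by
        rw [Submodule.mkQ_apply, Submodule.Quotient.mk_eq_zero]
        exact comm_mem_commSpan _ b b'
      rw [z1, z2, TensorProduct.zero_tmul, TensorProduct.tmul_zero, add_zero]

lemma commSpan_end_le :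
    commSpan F (Module.End F D) ≤
      (LinearMap.ker (PhiMap D)).map (muMap D).toLinearMap := by
  rw [commSpan, Submodule.span_le]
  rintro f ⟨g, h, rfl⟩
  obtain ⟨s, rfl⟩ := muMap_surjective D g
  obtain ⟨t, rfl⟩ := muMap_surjective D h
  refine ⟨s * t - t * s, ?_, ?_⟩
  · show PhiMap D (s * t - t * s) = 0
    rw [map_sub, PhiMap_mul_comm, sub_self]
  · show (muMap D) (s * t - t * s) = _
    rw [map_sub, _root_.map_mul, _root_.map_mul]

theorem quotient_commSpan_finrank_le_one :
    finrank F (D ⧸ commSpan F D) ≤ 1 := by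
  set N := finrank F D with hN
  have hN0 : 0 < N := finrank_pos
  -- lower bound on commutator span of End via matrices
  have h1 : N * N - 1 ≤ finrank F (commSpan F (Module.End F D)) := by
    rw [commSpan_finrank_algEquiv (algEquivMatrix (Module.finBasis F D))]
    exact commSpan_matrix_finrank _ N hN0
  have h2 : finrank F (commSpan F (Module.End F D)) ≤
      finrank F (LinearMap.ker (PhiMap D)) :=
    le_trans (Submodule.finrank_mono (commSpan_end_le D)) (Submodule.finrank_map_le _ _)
  -- rank-nullity for PhiMap
  have h3 := (PhiMap D).finrank_range_add_finrank_ker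
  have hrange : LinearMap.range (PhiMap D) = ⊤ :=
    LinearMap.range_eq_top.mpr (TensorProduct.map_surjective
      (Submodule.mkQ_surjective _) (Submodule.mkQ_surjective _))
  rw [hrange] at h3
  have hQQ : finrank F (⊤ : Submodule F ((D ⧸ commSpan F D) ⊗[F] (Dᵐᵒᵖ ⧸ commSpan F Dᵐᵒᵖ))) =
      finrank F (D ⧸ commSpan F D) * finrank F (Dᵐᵒᵖ ⧸ commSpan F Dᵐᵒᵖ) := by
    rw [finrank_top, Module.finrank_tensorProduct]
  have hDD : finrank F (D ⊗[F] Dᵐᵒᵖ) = N * N := by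
    rw [Module.finrank_tensorProduct, ← hN]
    congr 1
    exact (LinearEquiv.finrank_eq (opLinearEquiv F : D ≃ₗ[F] Dᵐᵒᵖ)).symm
  rw [hQQ, hDD] at h3
  -- the two quotients have the same dimension
  set q := finrank F (D ⧸ commSpan F D) with hq
  have hq' : finrank F (Dᵐᵒᵖ ⧸ commSpan F Dᵐᵒᵖ) = q := by
    have e1 := Submodule.finrank_quotient_add_finrank (commSpan F D)
    have e2 := Submodule.finrank_quotient_add_finrank (commSpan F Dᵐᵒᵖ)
    have e3 : finrank F Dᵐᵒᵖ = N :=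
      (LinearEquiv.finrank_eq (opLinearEquiv F : D ≃ₗ[F] Dᵐᵒᵖ)).symm
    have e4 := commSpan_op_finrank D
    rw [e3] at e2
    omega
  rw [hq'] at h3
  -- conclude q ≤ 1
  by_contra hcon
  push_neg at hcon
  have : 2 * 2 ≤ q * q := Nat.mul_le_mul hcon hcon
  omega

end MainCount

section CenterDecomp

open Module

variable (D : Type*) [DivisionRing D] [FiniteDimensional (Subring.center D) D]

local notation "F" => Subring.center D

/-- The regular trace kills the commutator span. -/
lemma trace_lmul_commSpan {w : D} (hw : w ∈ commSpan F D) :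
    LinearMap.trace F D (Algebra.lmul F D w) = 0 := by
  induction hw using Submodule.span_induction with
  | mem x hx =>
    obtain ⟨a, b, rfl⟩ := hx
    rw [map_sub, _root_.map_mul, _root_.map_mul, map_sub, LinearMap.trace_mul_comm, sub_self]
  | zero => rw [map_zero, map_zero]
  | add x y _ _ hx hy => rw [map_add, map_add, hx, hy, add_zero]
  | smul c x _ hx => rw [_root_.map_smul, _root_.map_smul, hx, smul_zero]

lemma one_not_mem_commSpan (p : ℕ) [Fact p.Prime] [CharP D p]
    (hpN : ¬ p ∣ finrank F D) : (1 : D) ∉ commSpan F D := by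
  intro h1
  have := trace_lmul_commSpan D h1
  rw [_root_.map_one, LinearMap.trace_one] at this
  -- (finrank F D : F) = 0
  have hD : ((finrank F D : ℕ) : D) = 0 := by
    have := congrArg (fun c : F => (c : D)) this
    simpa using this
  exact hpN ((CharP.cast_eq_zero_iff D p _).mp hD)

theorem exists_center_decomp (p : ℕ) [Fact p.Prime] [CharP D p]
    (hpN : ¬ p ∣ finrank F D) (t : D) :
    ∃ c : F, t - (c : D) ∈ commSpan F D := by
  have h1 : (1 : D) ∉ commSpan F D := one_not_mem_commSpan D p hpN
  have hqle := quotient_commSpan_finrank_le_one D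
  have hqne : finrank F (D ⧸ commSpan F D) ≠ 0 := by
    intro h0
    have := Submodule.finrank_quotient_add_finrank (commSpan F D)
    rw [h0, zero_add] at this
    exact h1 (Submodule.eq_top_of_finrank_eq this ▸ Submodule.mem_top)
  have hq1 : finrank F (D ⧸ commSpan F D) = 1 := le_antisymm hqle (Nat.one_le_iff_ne_zero.mpr hqne)
  have hv : ((commSpan F D).mkQ 1 : D ⧸ commSpan F D) ≠ 0 := by
    rw [Submodule.mkQ_apply, ne_eq, Submodule.Quotient.mk_eq_zero]
    exact h1
  obtain ⟨c, hc⟩ := (finrank_eq_one_iff_of_nonzero' _ hv).mp hq1 ((commSpan F D).mkQ t)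
  refine ⟨c, ?_⟩
  have : (commSpan F D).mkQ (t - c • (1 : D)) = 0 := by
    rw [map_sub, _root_.map_smul, hc, sub_self]
  rw [Submodule.mkQ_apply, Submodule.Quotient.mk_eq_zero] at this
  have hsmul : c • (1 : D) = (c : D) := by
    show (c : D) * 1 = (c : D)
    rw [mul_one]
  rwa [hsmul] at this

lemma commAdd_smul_mem (c : F) {x : D} (hx : x ∈ commutatorAddSubgroup D) :
    c • x ∈ commutatorAddSubgroup D := by
  induction hx using AddSubgroup.closure_induction with
  | mem u hu =>
    obtain ⟨a, b, rfl⟩ := hu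
    have : c • (a * b - b * a) = ((c : D) * a) * b - b * ((c : D) * a) := by
      have hcb : (c : D) * (b * a) = b * ((c : D) * a) := by
        rw [← mul_assoc, ← Subring.mem_center_iff.mp c.2 b, mul_assoc]
      show (c : D) * (a * b - b * a) = _
      rw [mul_sub, ← mul_assoc, hcb]
    rw [this]
    exact comm_mem _ _
  | zero => rw [smul_zero]; exact (commutatorAddSubgroup D).zero_mem
  | add u v _ _ hu hv =>
    rw [smul_add]
    exact (commutatorAddSubgroup D).add_mem hu hv
  | neg u _ hu =>
    rw [smul_neg]
    exact (commutatorAddSubgroup D).neg_mem hu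

/-- Bridge between the submodule span and the additive subgroup of commutators. -/
lemma commSpan_subset_commAdd {x : D} (hx : x ∈ commSpan F D) :
    x ∈ commutatorAddSubgroup D := by
  induction hx using Submodule.span_induction with
  | mem y hy => obtain ⟨a, b, rfl⟩ := hy; exact comm_mem a b
  | zero => exact (commutatorAddSubgroup D).zero_mem
  | add y z _ _ hy hz => exact (commutatorAddSubgroup D).add_mem hy hz
  | smul c y _ hy => exact commAdd_smul_mem D c hy

end CenterDecomp

section Final

open Module

lemma diagonal_eq_sum_stdBasisMatrix {R : Type*} [Ring R] {n : ℕ} (d : Fin n → R) :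
    (Matrix.diagonal d : Matrix (Fin n) (Fin n) R) = ∑ i, single i i (d i) := by
  ext a b
  rw [Matrix.sum_apply]
  by_cases h : a = b
  · subst h
    rw [Matrix.diagonal_apply_eq]
    rw [Finset.sum_eq_single a]
    · simp
    · intro i _ hia
      exact Matrix.single_apply_of_ne (c := d i) (h := by tauto)
    · intro h; exact absurd (Finset.mem_univ a) h
  · rw [Matrix.diagonal_apply_ne _ h]
    refine (Finset.sum_eq_zero fun i _ => ?_).symm
    exact Matrix.single_apply_of_ne (i := i) (j := i) (c := d i) (i' := a) (j' := b) (h := fun ⟨h1, h2⟩ => h (h1.symm.trans h2))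

theorem stmt_4 (D : Type*) [DivisionRing D]
    [FiniteDimensional (Subring.center D) D]
    (p : ℕ) [hp : Fact p.Prime] [CharP D p]
    (m : ℕ) (hm : Module.finrank (Subring.center D) D = m ^ 2) (hpm : ¬ p ∣ m)
    (n : ℕ) (hn : 0 < n) (hpn : ¬ p ∣ n) :
    ∀ A : Matrix (Fin n) (Fin n) D,
      ∃ z ∈ Set.center (Matrix (Fin n) (Fin n) D),
        ∃ c ∈ commutatorAddSubgroup (Matrix (Fin n) (Fin n) D), A = z + c := by
  intro A
  set F := Subring.center D
  -- p does not divide the dimension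
  have hpN : ¬ p ∣ finrank F D := by
    rw [hm]
    intro hdvd
    exact hpm (hp.out.dvd_of_dvd_pow hdvd)
  -- decompose the trace
  set t : D := Matrix.trace A with ht
  obtain ⟨c, hc⟩ := exists_center_decomp D p hpN t
  set w : D := t - (c : D) with hwdef
  have hw : w ∈ commutatorAddSubgroup D := commSpan_subset_commAdd D hc
  -- the scalar
  have hn0 : ((n : ℕ) : F) ≠ 0 := by
    intro h0
    have hD : ((n : ℕ) : D) = 0 := by
      have := congrArg (fun c : F => (c : D)) h0
      simpa using this
    exact hpn ((CharP.cast_eq_zero_iff D p _).mp hD)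
  set lam : F := ((n : ℕ) : F)⁻¹ * c with hlam
  set z : Matrix (Fin n) (Fin n) D := Matrix.diagonal (fun _ => (lam : D)) with hz
  have hzc : z ∈ Set.center (Matrix (Fin n) (Fin n) D) := by
    rw [Semigroup.mem_center_iff]
    intro B
    ext i j
    rw [hz, Matrix.mul_diagonal, Matrix.diagonal_mul]
    exact Subring.mem_center_iff.mp lam.2 (B i j)
  refine ⟨z, hzc, A - z, ?_, by abel⟩
  -- show A - z is a sum of commutators
  set z0 : Fin n := ⟨0, hn⟩
  have key1 : A - single z0 z0 t ∈ commutatorAddSubgroup (Matrix (Fin n) (Fin n) D) :=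
    matrix_sub_trace_mem hn A
  have key2 : single z0 z0 w ∈ commutatorAddSubgroup (Matrix (Fin n) (Fin n) D) :=
    stdBasisMatrix_comm_entry_mem z0 hw
  have hlamsum : (n : D) * (lam : D) = (c : D) := by
    have h1 : ((n : ℕ) : D) = (((n : ℕ) : F) : D) := by
      simp
    rw [h1, ← Subring.coe_mul, hlam, mul_inv_cancel_left₀ hn0]
  have key3 : single z0 z0 (c : D) - z
      ∈ commutatorAddSubgroup (Matrix (Fin n) (Fin n) D) := by
    have hzsum : z = ∑ i : Fin n, single i i (lam : D) :=
      diagonal_eq_sum_stdBasisMatrix _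
    have hident : single z0 z0 (c : D) - z =
        ∑ i : Fin n, (single z0 z0 (lam : D) - single i i (lam : D)) := by
      rw [Finset.sum_sub_distrib, ← hzsum, Finset.sum_const, Finset.card_univ, Fintype.card_fin,
        smul_single, nsmul_eq_mul, hlamsum]
    rw [hident]
    refine AddSubgroup.sum_mem _ fun i _ => ?_
    have := AddSubgroup.neg_mem _ (stdBasisMatrix_diag_sub_mem i z0 ((lam : D)))
    rwa [neg_sub] at this
  have hfinal : A - z = (A - single z0 z0 t) + single z0 z0 w +
      (single z0 z0 (c : D) - z) := by
    have hcw : (c : D) + w = t := by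
      show (c : D) + (t - (c : D)) = t
      abel
    have hts : single z0 z0 t =
        single z0 z0 (c : D) + single z0 z0 w := by
      rw [← single_add, hcw]
    rw [hts]
    abel
  rw [hfinal]
  exact AddSubgroup.add_mem _ (AddSubgroup.add_mem _ key1 key2) key3

end Final
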